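/- Let Y_V be a discrete random vector with strictly positive probability table, V = P ∪̇ B, and Y^B = (Y_P, X_{J_B}) its B-expansion. Let μ̃^{j_Q}_K (for j_Q in the restricted state space of Y_Q, Q ⊆ P, K ⊆ J_B) denote the Möbius parameters of Y^B and γ̃^{j_Q}_K the corresponding LML parameters. If L ⊆ P ∪ J_B is primary with L = Q ∪ j_D, then μ^{j_{Q∪D}} = μ̃^{j_Q}_{j_D} and γ^{j_{Q∪D}} = γ̃^{j_Q}_{j_D} for every j_Q ∈ J_Q, where μ and γ are the Möbius and LML parameters of Y_V and j_{Q∪D} = j_Q ∪ j_D. If L = Q ∪ K is non-primary, then μ̃^{j_Q}_K = 0 for every j_Q ∈ J_Q (dichotomization invariance). -/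

import Mathlib

open Finset

open Classical in
/-- Probability of an event under a distribution `p` on a finite sample space. -/
noncomputable def Pr {Ω : Type*} [Fintype Ω] (p : Ω → ℝ) (φ : Ω → Prop) : ℝ :=
  ∑ x ∈ Finset.univ.filter (fun x => φ x), p x

/-- Möbius parameter `μ^{j_U} = P(Y_U = j_U)` of `Y_V`. -/
noncomputable def mobY {V : Type*} [Fintype V] [DecidableEq V] {I : V → Type*}
    [∀ v, Fintype (I v)] (p : (∀ v, I v) → ℝ) (U : Finset V) (j : ∀ v, I v) : ℝ :=
  Pr p (fun x => ∀ v ∈ U, x v = j v)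

/-- LML parameter `γ^{j_U}` of `Y_V`. -/
noncomputable def lmlY {V : Type*} [Fintype V] [DecidableEq V] {I : V → Type*}
    [∀ v, Fintype (I v)] (p : (∀ v, I v) → ℝ) (U : Finset V) (j : ∀ v, I v) : ℝ :=
  ∑ E ∈ U.powerset, (-1 : ℝ) ^ (U \ E).card * Real.log (mobY p E j)

/-- Möbius parameter `μ̃^{j_Q}_K = P(Y_Q = j_Q, X_K = 1_K)` of the `B`-expansion
`Y^B = (Y_P, X_{J_B})`; levels in `J_B` are encoded as elements of `Σ v, I v`. -/
noncomputable def mobExp {V : Type*} [Fintype V] [DecidableEq V] {I : V → Type*}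
    [∀ v, Fintype (I v)] (p : (∀ v, I v) → ℝ)
    (Q : Finset V) (K : Finset (Σ v, I v)) (j : ∀ v, I v) : ℝ :=
  Pr p (fun x => (∀ v ∈ Q, x v = j v) ∧ ∀ s ∈ K, x s.1 = s.2)

/-- LML parameter `γ̃^{j_Q}_K` of the `B`-expansion (Möbius transform of
`log μ̃` over the subset lattice of `Q ∪ K`). -/
noncomputable def lmlExp {V : Type*} [Fintype V] [DecidableEq V] {I : V → Type*}
    [∀ v, Fintype (I v)] [∀ v, DecidableEq (I v)] (p : (∀ v, I v) → ℝ)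
    (Q : Finset V) (K : Finset (Σ v, I v)) (j : ∀ v, I v) : ℝ :=
  ∑ Q' ∈ Q.powerset, ∑ K' ∈ K.powerset,
    (-1 : ℝ) ^ ((Q \ Q').card + (K \ K').card) * Real.log (mobExp p Q' K' j)

/-- `μ̃^{j_{Q'}}_{j_{D'}} = μ^{j_{Q'∪D'}}` for any `Q'`, `D'`. -/
lemma mobExp_image {V : Type*} [Fintype V] [DecidableEq V] {I : V → Type*}
    [∀ v, Fintype (I v)] [∀ v, DecidableEq (I v)] (p : (∀ v, I v) → ℝ)
    (j : ∀ v, I v) (Q' D' : Finset V) :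
    mobExp p Q' (D'.image fun v => (⟨v, j v⟩ : Σ v, I v)) j = mobY p (Q' ∪ D') j := by
  unfold mobExp mobY Pr
  congr 1
  ext x
  simp only [Finset.mem_filter, Finset.mem_univ, true_and, Finset.mem_image,
    Finset.mem_union]
  constructor
  · rintro ⟨h1, h2⟩ v hv
    rcases hv with hv | hv
    · exact h1 v hv
    · exact h2 ⟨v, j v⟩ ⟨v, hv, rfl⟩
  · rintro h
    refine ⟨fun v hv => h v (Or.inl hv), ?_⟩
    rintro s ⟨v, hv, rfl⟩
    exact h v (Or.inr hv)

/-- reindexing a sum over the powerset of an image along `v ↦ ⟨v, j v⟩`. -/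
lemma sum_powerset_image {V : Type*} [DecidableEq V] {I : V → Type*}
    [∀ v, DecidableEq (I v)] (j : ∀ v, I v) (D : Finset V)
    (g : Finset (Σ v, I v) → ℝ) :
    ∑ K' ∈ ((D.image fun v => (⟨v, j v⟩ : Σ v, I v))).powerset, g K'
      = ∑ D' ∈ D.powerset, g (D'.image fun v => (⟨v, j v⟩ : Σ v, I v)) := by
  set f : V → Σ v, I v := fun v => ⟨v, j v⟩ with hf
  have hinv : ∀ K' ∈ (D.image f).powerset, (K'.image Sigma.fst).image f = K' := by
    intro K' hK'
    rw [Finset.mem_powerset] at hK'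
    rw [Finset.image_image]
    have : (K' : Set (Σ v, I v)).EqOn (f ∘ Sigma.fst) id := by
      intro s hs
      have := hK' hs
      simp only [Finset.mem_image] at this
      obtain ⟨v, _, rfl⟩ := this
      rfl
    rw [Finset.image_congr this, Finset.image_id]
  refine Finset.sum_nbij' (fun K' => K'.image Sigma.fst) (fun D' => D'.image f)
    ?_ ?_ ?_ ?_ ?_
  · intro K' hK'
    rw [Finset.mem_powerset] at hK' ⊢
    intro v hv
    simp only [Finset.mem_image] at hv
    obtain ⟨s, hs, rfl⟩ := hv
    have := hK' hs
    simp only [Finset.mem_image] at this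
    obtain ⟨w, hw, rfl⟩ := this
    exact hw
  · intro D' hD'
    rw [Finset.mem_powerset] at hD' ⊢
    exact Finset.image_subset_image hD'
  · exact hinv
  · intro D' hD'
    rw [Finset.image_image]
    exact Finset.image_id'
  · intro K' hK'
    rw [hinv K' hK']

/-- splitting a powerset sum along a disjoint union. -/
lemma sum_powerset_union {V : Type*} [DecidableEq V] (Q D : Finset V)
    (h : Disjoint Q D) (g : Finset V → ℝ) :
    ∑ E ∈ (Q ∪ D).powerset, g E
      = ∑ Q' ∈ Q.powerset, ∑ D' ∈ D.powerset, g (Q' ∪ D') := by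
  rw [← Finset.sum_product']
  refine Finset.sum_nbij' (fun E => (E ∩ Q, E ∩ D)) (fun pr => pr.1 ∪ pr.2)
    ?_ ?_ ?_ ?_ ?_
  · intro E hE
    simp only [Finset.mem_product, Finset.mem_powerset]
    exact ⟨Finset.inter_subset_right, Finset.inter_subset_right⟩
  · intro pr hpr
    simp only [Finset.mem_product, Finset.mem_powerset] at hpr ⊢
    exact Finset.union_subset_union hpr.1 hpr.2
  · intro E hE
    rw [Finset.mem_powerset] at hE
    simp only
    rw [← Finset.inter_union_distrib_left, Finset.inter_eq_left.mpr hE]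
  · rintro ⟨A, C⟩ hpr
    simp only [Finset.mem_product, Finset.mem_powerset] at hpr
    have h1 : A ∩ D = ∅ := Finset.disjoint_iff_inter_eq_empty.mp (h.mono_left hpr.1)
    have h2 : C ∩ Q = ∅ := Finset.disjoint_iff_inter_eq_empty.mp (h.symm.mono_left hpr.2)
    simp only [Prod.mk.injEq]
    constructor
    · rw [Finset.union_inter_distrib_right, Finset.inter_eq_left.mpr hpr.1, h2]
      simp
    · rw [Finset.union_inter_distrib_right, h1, Finset.inter_eq_left.mpr hpr.2]
      simp
  · intro E hE
    rw [Finset.mem_powerset] at hE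
    simp only
    rw [← Finset.inter_union_distrib_left, Finset.inter_eq_left.mpr hE]

/-- dichotomization invariance: let `Y_V`, `V = P ∪̇ B`, be a
strictly positive discrete vector with baselines `z`, and `Y^B = (Y_P, X_{J_B})`
its `B`-expansion. If `L = Q ∪ j_D` is a primary subset of `P ∪ J_B` (`Q ⊆ P`,
`D ⊆ B`, `K` selecting the non-baseline level `j v` for each `v ∈ D`), then
`μ^{j_{Q∪D}} = μ̃^{j_Q}_{j_D}` and `γ^{j_{Q∪D}} = γ̃^{j_Q}_{j_D}`.
If `L = Q ∪ K` is non-primary, then `μ̃^{j_Q}_K = 0`. -/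
theorem stmt15 {V : Type*} [Fintype V] [DecidableEq V] {I : V → Type*}
    [∀ v, Fintype (I v)] [∀ v, DecidableEq (I v)] (z : ∀ v, I v)
    (P B : Finset V) (hPB : Disjoint P B) (hPBu : P ∪ B = Finset.univ)
    (p : (∀ v, I v) → ℝ) (hp : ∀ x, 0 < p x) (hsum : ∑ x, p x = 1) :
    (∀ Q ⊆ P, ∀ D ⊆ B, ∀ (j : ∀ v, I v), (∀ v ∈ Q ∪ D, j v ≠ z v) →
      ∀ K : Finset (Σ v, I v),
        (∀ s : Σ v, I v, s ∈ K ↔ (s.1 ∈ D ∧ s = ⟨s.1, j s.1⟩)) →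
        (mobY p (Q ∪ D) j = mobExp p Q K j ∧ lmlY p (Q ∪ D) j = lmlExp p Q K j)) ∧
    (∀ Q ⊆ P, ∀ K : Finset (Σ v, I v), (∀ s ∈ K, s.1 ∈ B ∧ s.2 ≠ z s.1) →
      (∃ s ∈ K, ∃ t ∈ K, s.1 = t.1 ∧ s ≠ t) →
      ∀ j : ∀ v, I v, (∀ v ∈ Q, j v ≠ z v) → mobExp p Q K j = 0) := by
  constructor
  · intro Q hQ D hD j _ K hK
    set f : V → Σ v, I v := fun v => ⟨v, j v⟩ with hf
    have hKD : K = D.image f := by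
      ext s
      rw [hK s]
      simp only [Finset.mem_image]
      constructor
      · rintro ⟨h1, h2⟩
        exact ⟨s.1, h1, h2.symm⟩
      · rintro ⟨v, hv, rfl⟩
        exact ⟨hv, rfl⟩
    have hQD : Disjoint Q D := (hPB.mono_left hQ).mono_right hD
    constructor
    · rw [hKD, mobExp_image]
    · rw [hKD]
      unfold lmlExp lmlY
      rw [sum_powerset_union Q D hQD]
      refine Finset.sum_congr rfl fun Q' hQ' => ?_
      rw [sum_powerset_image]
      refine Finset.sum_congr rfl fun D' hD' => ?_
      rw [Finset.mem_powerset] at hQ' hD'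
      rw [mobExp_image]
      congr 2
      have himg : (D.image f) \ (D'.image f) = (D \ D').image f := by
        rw [Finset.image_sdiff]
        intro a b hab
        exact congrArg Sigma.fst hab
      rw [himg, Finset.card_image_of_injective _ (fun a b hab => congrArg Sigma.fst hab)]
      have hset : (Q ∪ D) \ (Q' ∪ D') = (Q \ Q') ∪ (D \ D') := by
        have h1 : ∀ a ∈ Q, a ∉ D := fun a ha => Finset.disjoint_left.mp hQD ha
        have h2 : ∀ a ∈ D', a ∈ D := fun a ha => hD' ha
        have h3 : ∀ a ∈ Q', a ∈ Q := fun a ha => hQ' ha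
        ext a
        simp only [Finset.mem_sdiff, Finset.mem_union]
        constructor
        · rintro ⟨hQD' | hDa, hn⟩
          · exact Or.inl ⟨hQD', fun hc => hn (Or.inl hc)⟩
          · exact Or.inr ⟨hDa, fun hc => hn (Or.inr hc)⟩
        · rintro (⟨ha, hn⟩ | ⟨ha, hn⟩)
          · exact ⟨Or.inl ha, fun hc => hc.elim hn (fun hc' => h1 a ha (h2 a hc'))⟩
          · refine ⟨Or.inr ha, fun hc => hc.elim (fun hc' => h1 a (h3 a hc') ha) hn⟩
      rw [hset, Finset.card_union_of_disjoint]
      exact (hQD.mono_left Finset.sdiff_subset).mono_right Finset.sdiff_subset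
  · intro Q hQ K hKB ⟨s, hs, t, ht, hst1, hst⟩ j hj
    unfold mobExp Pr
    have hempty : ∀ x ∈ (Finset.univ : Finset (∀ v, I v)),
        ¬((∀ v ∈ Q, x v = j v) ∧ ∀ s ∈ K, x s.1 = s.2) := by
      rintro x - ⟨-, h2⟩
      apply hst
      obtain ⟨a, sa⟩ := s
      obtain ⟨b, tb⟩ := t
      cases hst1
      have heq : sa = tb := by
        have h1 := h2 ⟨a, sa⟩ hs
        have h2' := h2 ⟨a, tb⟩ ht
        simp only at h1 h2'
        rw [← h1, ← h2']
      rw [heq]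
    refine (Finset.sum_congr ?_ (fun _ _ => rfl)).trans Finset.sum_empty
    ext x
    simp only [Finset.mem_filter, Finset.mem_univ, true_and, Finset.notMem_empty,
      iff_false]
    exact hempty x (Finset.mem_univ x)
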